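/- Let H = H₀ ⊕ H₁ be a complex Hilbert space written as the orthogonal direct sum of two closed subspaces, let n ∈ {0,1}, and let J be a unitary operator on H with J(H_i) ⊆ H_{i+n mod 2} and J²x = (−1)^{(n+1)i} x for all x ∈ H_i (i ∈ {0,1}). Define ⟨x,y⟩ := (Jx, y) for x,y ∈ H, where (·,·) is the Hilbert inner product. Let T be a bounded operator homogeneous of degree t ∈ {0,1} (i.e. T(H_i) ⊆ H_{i+t mod 2}), and define its superadjoint T† as the bounded operator acting on x ∈ H_i by T†x = (−1)^{(n+1)(t+i)+ti} J T* J x (extended additively to H), where T* is the Hilbert-space adjoint of T. Then for every homogeneous x ∈ H_i and every y ∈ H: ⟨T†x, y⟩ = (−1)^{t·i} ⟨x, Ty⟩. -/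

import Mathlib

open ContinuousLinearMap

noncomputable section

/-- Let `H = H₀ ⊕ H₁` be a complex Hilbert space, orthogonal direct sum of
two closed subspaces, `n ∈ {0,1}`, and `J` a unitary operator with `J(H_i) ⊆ H_{i+n}` and
`J² = (−1)^{(n+1)i}` on `H_i`. For a bounded operator `T` homogeneous of degree `t`, the
superadjoint `T†x = (−1)^{(n+1)(t+i)+ti} J T* J x` (for `x ∈ H_i`) satisfies
`⟨T†x, y⟩ = (−1)^{ti} ⟨x, Ty⟩` where `⟨x,y⟩ = (Jx,y)`. -/
theorem superadjoint_defining_property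
    (H : Type*) [NormedAddCommGroup H] [InnerProductSpace ℂ H] [CompleteSpace H]
    (Hsub : Fin 2 → Submodule ℂ H)
    (hclosed : ∀ i, IsClosed (Hsub i : Set H))
    (horth : ∀ x ∈ Hsub 0, ∀ y ∈ Hsub 1, (inner ℂ x y : ℂ) = 0)
    (hspan : ∀ x : H, ∃ x₀ ∈ Hsub 0, ∃ x₁ ∈ Hsub 1, x = x₀ + x₁)
    (n : Fin 2) (J : H →L[ℂ] H)
    (hJinner : ∀ x y : H, (inner ℂ (J x) (J y) : ℂ) = inner ℂ x y)
    (hJsurj : Function.Surjective J)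
    (hJgrade : ∀ i : Fin 2, ∀ x ∈ Hsub i, J x ∈ Hsub (i + n))
    (hJsq : ∀ i : Fin 2, ∀ x ∈ Hsub i,
      J (J x) = ((-1 : ℂ)) ^ (((n : ℕ) + 1) * (i : ℕ)) • x)
    (T : H →L[ℂ] H) (t : Fin 2)
    (hT : ∀ i : Fin 2, ∀ x ∈ Hsub i, T x ∈ Hsub (i + t)) :
    ∀ i : Fin 2, ∀ x ∈ Hsub i, ∀ y : H,
      (inner ℂ (J (((-1 : ℂ)) ^ (((n : ℕ) + 1) * ((t : ℕ) + (i : ℕ)) + (t : ℕ) * (i : ℕ)) •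
          J ((adjoint T) (J x)))) y : ℂ) =
        ((-1 : ℂ)) ^ ((t : ℕ) * (i : ℕ)) * (inner ℂ (J x) (T y) : ℂ) := by

  have hperp : ∀ j : Fin 2, ∀ x : H, (∀ w ∈ Hsub (j+1), (inner ℂ x w : ℂ) = 0) → x ∈ Hsub j := by
    intro j x hx
    obtain ⟨x₀, h₀, x₁, h₁, rfl⟩ := hspan x
    fin_cases j
    · have h := hx x₁ (by simpa using h₁)
      rw [inner_add_left, horth x₀ h₀ x₁ h₁, zero_add, inner_self_eq_zero] at h
      simpa [h] using h₀
    · have h := hx x₀ (by simpa using h₀)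
      have h10 : (inner ℂ x₁ x₀ : ℂ) = 0 := by
        rw [← inner_conj_symm, horth x₀ h₀ x₁ h₁, map_zero]
      rw [inner_add_left, h10, add_zero, inner_self_eq_zero] at h
      simpa [h] using h₁
  have horth' : ∀ j : Fin 2, ∀ u ∈ Hsub j, ∀ v ∈ Hsub (j+1), (inner ℂ u v : ℂ) = 0 := by
    intro j
    fin_cases j
    · simpa using horth
    · intro u hu v hv
      have hv' : v ∈ Hsub 0 := by simpa using hv
      rw [← inner_conj_symm, horth v hv' u hu, map_zero]
  have hTadj : ∀ j : Fin 2, ∀ u ∈ Hsub j, adjoint T u ∈ Hsub (j + t) := by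
    intro j u hu
    apply hperp
    intro w hw
    rw [adjoint_inner_left]
    have hTw : T w ∈ Hsub (j + t + 1 + t) := hT _ w hw
    have he : j + t + 1 + t = j + 1 := by fin_cases j <;> fin_cases t <;> decide
    rw [he] at hTw
    exact horth' j u hu (T w) hTw
  intro i x hx y
  have hz : adjoint T (J x) ∈ Hsub (i + n + t) := hTadj _ _ (hJgrade i x hx)
  have hJsq' := hJsq (i + n + t) _ hz
  rw [map_smul, inner_smul_left, hJsq', inner_smul_left, adjoint_inner_left, ← mul_assoc]
  congr 1
  fin_cases n <;> fin_cases t <;> fin_cases i <;> simp <;> norm_num
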